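/- arXiv:1403.8027 — 4 statements merged into one kernel-verified Lean document; each statement's English description precedes it below -/
import Mathlib

section
/- If G is a k-critical graph and M is a non-trivial module of G, then the subgraph of G induced by M is ℓ-critical for some ℓ < k. -/
open SimpleGraph

/-- A graph is `k`-critical if its chromatic number equals `k` and every proper
induced subgraph is `(k-1)`-colorable. -/
def IsKCritical {V : Type*} (G : SimpleGraph V) (k : ℕ) : Prop :=
  G.chromaticNumber = k ∧ ∀ s : Set V, s ≠ Set.univ → (G.induce s).Colorable (k - 1)

/-- A set `X` of vertices is a module if every vertex outside `X` is adjacent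
either to all vertices of `X` or to none of them. -/
def IsModule {V : Type*} (G : SimpleGraph V) (X : Set V) : Prop :=
  ∀ v ∉ X, (∀ x ∈ X, G.Adj v x) ∨ (∀ x ∈ X, ¬ G.Adj v x)

/-- `G` contains no induced subgraph isomorphic to `H`. -/
def InducedFree {V W : Type*} (G : SimpleGraph V) (H : SimpleGraph W) : Prop :=
  ¬ ∃ s : Set V, Nonempty ((G.induce s) ≃g H)

/-- `G` is (P5, P5-bar)-free. -/
def P5P5barFree {V : Type*} (G : SimpleGraph V) : Prop :=
  InducedFree G (pathGraph 5) ∧ InducedFree G (pathGraph 5)ᶜ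

/-- A buoy in `G` given by its five non-empty bags. -/
structure IsBuoy {V : Type*} (G : SimpleGraph V) (B : Fin 5 → Set V) : Prop where
  nonempty : ∀ i, (B i).Nonempty
  disjoint : ∀ i j, i ≠ j → Disjoint (B i) (B j)
  adj_next : ∀ i, ∀ x ∈ B i, ∀ y ∈ B (i + 1), G.Adj x y
  not_adj_skip : ∀ i, ∀ x ∈ B i, ∀ y ∈ B (i + 2), ¬ G.Adj x y

/-- `G` is a pseudo-buoy with (possibly empty) bags `B 0, …, B 4` partitioning
its vertex set. -/
structure IsPseudoBuoy {V : Type*} (G : SimpleGraph V) (B : Fin 5 → Set V) : Prop where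
  cover : (⋃ i, B i) = Set.univ
  disjoint : ∀ i j, i ≠ j → Disjoint (B i) (B j)
  adj_next : ∀ i, ∀ x ∈ B i, ∀ y ∈ B (i + 1), G.Adj x y
  not_adj_skip : ∀ i, ∀ x ∈ B i, ∀ y ∈ B (i + 2), ¬ G.Adj x y

/-- The graph obtained from `G` by substituting `H` for the module `M`. -/
def substitute {V W : Type*} (G : SimpleGraph V) (M : Set V) (H : SimpleGraph W) :
    SimpleGraph ({v : V // v ∉ M} ⊕ W) where
  Adj x y :=
    match x, y with
    | Sum.inl a, Sum.inl b => G.Adj a b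
    | Sum.inl a, Sum.inr _ => ∃ m ∈ M, G.Adj a m
    | Sum.inr _, Sum.inl b => ∃ m ∈ M, G.Adj b m
    | Sum.inr a, Sum.inr b => H.Adj a b
  symm := by
    constructor
    rintro (a | a) (b | b) h
    · exact G.adj_symm h
    · exact h
    · exact h
    · exact H.adj_symm h
  loopless := by
    constructor
    rintro (a | a) h
    · exact G.irrefl h
    · exact H.irrefl h

/-- The join of two graphs. -/
def joinGraph {V W : Type*} (G : SimpleGraph V) (H : SimpleGraph W) :
    SimpleGraph (V ⊕ W) where
  Adj x y :=
    match x, y with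
    | Sum.inl a, Sum.inl b => G.Adj a b
    | Sum.inl _, Sum.inr _ => True
    | Sum.inr _, Sum.inl _ => True
    | Sum.inr a, Sum.inr b => H.Adj a b
  symm := by
    constructor
    rintro (a | a) (b | b) h
    · exact G.adj_symm h
    · trivial
    · trivial
    · exact H.adj_symm h
  loopless := by
    constructor
    rintro (a | a) h
    · exact G.irrefl h
    · exact H.irrefl h

/-- A non-trivial module of a `k`-critical graph induces an `ℓ`-critical graph
for some `ℓ < k`. -/
theorem module_of_critical_is_critical {V : Type*} [Fintype V]
    (G : SimpleGraph V) (k : ℕ) (hk : 1 ≤ k) (hG : IsKCritical G k)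
    (M : Set V) (hM : IsModule G M) (hM2 : 2 ≤ M.ncard) (hMne : M ≠ Set.univ) :
    ∃ ℓ : ℕ, ℓ < k ∧ IsKCritical (G.induce M) ℓ := by
  classical
  obtain ⟨hχ, hcrit⟩ := hG
  haveI : Fintype ↥M := Fintype.ofFinite _
  have hcol : (G.induce M).Colorable (k-1) := hcrit M hMne
  have hℓtop : (G.induce M).chromaticNumber ≠ ⊤ :=
    (lt_of_le_of_lt hcol.chromaticNumber_le (WithTop.coe_lt_top _)).ne
  set ℓ := ENat.toNat ((G.induce M).chromaticNumber) with hℓdef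
  have hℓeq : (G.induce M).chromaticNumber = (ℓ : ℕ∞) := (ENat.coe_toNat hℓtop).symm
  have hℓle : (ℓ:ℕ∞) ≤ ((k-1 : ℕ) : ℕ∞) := hℓeq ▸ hcol.chromaticNumber_le
  have hℓlt : ℓ < k := lt_of_le_of_lt (by exact_mod_cast hℓle) (Nat.sub_lt hk one_pos)
  refine ⟨ℓ, hℓlt, hℓeq, ?_⟩
  intro s hs
  by_contra hns
  -- s is nonempty
  have hsne : s.Nonempty := by
    rcases s.eq_empty_or_nonempty with h | h
    · exfalso
      apply hns
      haveI : IsEmpty ↥s := by rw [h]; exact Set.instIsEmptyElemEmptyCollection _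
      exact SimpleGraph.Colorable.of_isEmpty _
    · exact h
  set S : Set V := Subtype.val '' s with hSdef
  set T : Set V := S ∪ Mᶜ with hTdef
  have hT : T ≠ Set.univ := by
    obtain ⟨x, hx⟩ := (Set.ne_univ_iff_exists_notMem s).mp hs
    intro hcon
    have : x.1 ∈ T := hcon ▸ Set.mem_univ _
    rcases this with h | h
    · obtain ⟨y, hy, hyx⟩ := h
      exact hx (by rwa [show y = x from Subtype.ext hyx] at hy)
    · exact h x.2
  obtain ⟨c⟩ := hcrit T hT
  -- the coloring of s induced by c
  haveI : Fintype ↥s := Fintype.ofFinite _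
  have hmemT : ∀ y : ↥s, (y.1.1 : V) ∈ T := fun y => Or.inl ⟨y.1, y.2, rfl⟩
  set f : ↥s → Fin (k-1) := fun y => c ⟨y.1.1, hmemT y⟩ with hfdef
  have hfvalid : ∀ y z : ↥s, ((G.induce M).induce s).Adj y z → f y ≠ f z := by
    intro y z hadj
    exact c.valid (show (G.induce T).Adj ⟨y.1.1, hmemT y⟩ ⟨z.1.1, hmemT z⟩ from hadj)
  set t : Finset (Fin (k-1)) := Finset.univ.image f with htdef
  have hcard : ℓ ≤ t.card := by
    by_contra hlt
    push_neg at hlt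
    apply hns
    have C' : ((G.induce M).induce s).Coloring ↥t :=
      SimpleGraph.Coloring.mk
        (fun y => ⟨f y, Finset.mem_image_of_mem f (Finset.mem_univ y)⟩)
        (fun {y z} hadj h => hfvalid y z hadj (congrArg Subtype.val h))
    have := C'.colorable
    rw [Fintype.card_coe] at this
    exact this.mono (Nat.le_sub_one_of_lt hlt)
  obtain ⟨emb⟩ : Nonempty (Fin ℓ ↪ ↥t) :=
    Function.Embedding.nonempty_of_card_le (by simpa using hcard)
  obtain ⟨d⟩ : (G.induce M).Colorable ℓ :=
    (G.induce M).colorable_chromaticNumber_of_fintype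
  -- build a (k-1)-coloring of G
  set e : V → Fin (k-1) := fun v =>
    if h : v ∈ M then ((emb (d ⟨v, h⟩)).1 : Fin (k-1)) else c ⟨v, Or.inr h⟩ with hedef
  have key : ∀ v w : V, v ∉ M → w ∈ M → G.Adj v w → e v ≠ e w := by
    intro v w hv hw hadj heq
    rcases hM v hv with hall | hnone
    swap
    · exact hnone w hw hadj
    have hev : e v = c ⟨v, Or.inr hv⟩ := dif_neg hv
    have hew : e w = (emb (d ⟨w, hw⟩)).1 := dif_pos hw
    have hmem : (emb (d ⟨w, hw⟩)).1 ∈ t := (emb (d ⟨w, hw⟩)).2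
    obtain ⟨y, -, hy⟩ :=
      Finset.mem_image.mp (show (emb (d ⟨w, hw⟩)).1 ∈ Finset.univ.image f from hmem)
    have hadj' : (G.induce T).Adj ⟨v, Or.inr hv⟩ ⟨y.1.1, hmemT y⟩ := hall y.1.1 y.1.2
    apply c.valid hadj'
    rw [show c ⟨y.1.1, hmemT y⟩ = f y from rfl, hy, ← hew, ← heq, hev]
  have C : G.Coloring (Fin (k-1)) := by
    refine SimpleGraph.Coloring.mk e ?_
    intro v w hadj heq
    by_cases hv : v ∈ M <;> by_cases hw : w ∈ M
    · have hev : e v = (emb (d ⟨v, hv⟩)).1 := dif_pos hv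
      have hew : e w = (emb (d ⟨w, hw⟩)).1 := dif_pos hw
      have : d ⟨v, hv⟩ = d ⟨w, hw⟩ :=
        emb.injective (Subtype.ext (by rw [← hev, ← hew, heq]))
      exact d.valid (show (G.induce M).Adj ⟨v, hv⟩ ⟨w, hw⟩ from hadj) this
    · exact key w v hw hv hadj.symm heq.symm
    · exact key v w hv hw hadj heq
    · have hev : e v = c ⟨v, Or.inr hv⟩ := dif_neg hv
      have hew : e w = c ⟨w, Or.inr hw⟩ := dif_neg hw
      exact c.valid (show (G.induce T).Adj ⟨v, Or.inr hv⟩ ⟨w, Or.inr hw⟩ from hadj)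
        (by rw [← hev, ← hew, heq])
  have : G.chromaticNumber ≤ ((Fintype.card (Fin (k-1)) : ℕ) : ℕ∞) :=
    C.colorable.chromaticNumber_le
  rw [Fintype.card_fin, hχ, Nat.cast_le] at this
  exact absurd this (Nat.not_le.mpr (Nat.sub_lt hk one_pos))
end

section
/- Let h ≥ 0 be an integer and let H be a pseudo-buoy with bags B1,…,B5 such that, for each i mod 5, the bag B_i is k_i-colorable, where k_1,…,k_5 are non-negative integers satisfying k_i + k_{i+1} ≤ h for each i mod 5. If k_1 + k_2 + k_3 + k_4 + k_5 ≤ 2h, then H is h-colorable. -/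
open SimpleGraph

lemma exists_w (a0 a1 a2 a3 a4 h : ℕ)
    (h02 : a0 + a2 ≤ h) (h13 : a1 + a3 ≤ h) (h24 : a2 + a4 ≤ h)
    (h30 : a3 + a0 ≤ h) (h41 : a4 + a1 ≤ h)
    (hs : a0 + a1 + a2 + a3 + a4 ≤ 2 * h) :
    ∃ w0 w1 w2 w3 w4 : ℕ,
      a0 ≤ w0 + w1 ∧ a1 ≤ w1 + w2 ∧ a2 ≤ w2 + w3 ∧ a3 ≤ w3 + w4 ∧
      a4 ≤ w4 + w0 ∧ w0 + w1 + w2 + w3 + w4 ≤ h := by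
  obtain ⟨t, ht⟩ : ∃ t, t = a0 - (a0 - ((a0 + a2 + a4 - (a1 + a3)) / 2)) := ⟨_, rfl⟩
  exact ⟨t, a0 - t, a1 - (a0 - t), a2 - (a1 - (a0 - t)),
    (a3 - (a2 - (a1 - (a0 - t)))) + ((a4 - t) - (a3 - (a2 - (a1 - (a0 - t))))),
    by omega, by omega, by omega, by omega, by omega, by omega⟩

lemma exists_off (k0 k1 k2 k3 k4 h : ℕ)
    (p0 : k0 + k1 ≤ h) (p1 : k1 + k2 ≤ h) (p2 : k2 + k3 ≤ h)
    (p3 : k3 + k4 ≤ h) (p4 : k4 + k0 ≤ h)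
    (hs : k0 + k1 + k2 + k3 + k4 ≤ 2 * h) :
    ∃ f : ℕ → ℕ → ℕ,
      (∀ j, j < k0 → f 0 j < h) ∧ (∀ j, j < k1 → f 1 j < h) ∧
      (∀ j, j < k2 → f 2 j < h) ∧ (∀ j, j < k3 → f 3 j < h) ∧
      (∀ j, j < k4 → f 4 j < h) ∧
      (∀ j j', j < k0 → j' < k0 → f 0 j = f 0 j' → j = j') ∧
      (∀ j j', j < k1 → j' < k1 → f 1 j = f 1 j' → j = j') ∧
      (∀ j j', j < k2 → j' < k2 → f 2 j = f 2 j' → j = j') ∧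
      (∀ j j', j < k3 → j' < k3 → f 3 j = f 3 j' → j = j') ∧
      (∀ j j', j < k4 → j' < k4 → f 4 j = f 4 j' → j = j') ∧
      (∀ j j', j < k0 → j' < k1 → f 0 j ≠ f 1 j') ∧
      (∀ j j', j < k1 → j' < k2 → f 1 j ≠ f 2 j') ∧
      (∀ j j', j < k2 → j' < k3 → f 2 j ≠ f 3 j') ∧
      (∀ j j', j < k3 → j' < k4 → f 3 j ≠ f 4 j') ∧
      (∀ j j', j < k4 → j' < k0 → f 4 j ≠ f 0 j') := by
  obtain ⟨w0, w1, w2, w3, w4, q0, q1, q2, q3, q4, qs⟩ :=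
    exists_w k0 k3 k1 k4 k2 h p0 p3 p1 p4 p2 (by omega)
  refine ⟨fun i j => match i with
    | 0 => j
    | 1 => w0 + w1 + j
    | 2 => if j < w4 then w0 + w1 + w2 + w3 + j else j - w4
    | 3 => w0 + j
    | _ => w0 + w1 + w2 + j,
    ?_, ?_, ?_, ?_, ?_, ?_, ?_, ?_, ?_, ?_, ?_, ?_, ?_, ?_, ?_⟩
  · intro j hj; show j < h; omega
  · intro j hj; show w0 + w1 + j < h; omega
  · intro j hj; show (if j < w4 then w0 + w1 + w2 + w3 + j else j - w4) < h
    split_ifs <;> omega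
  · intro j hj; show w0 + j < h; omega
  · intro j hj; show w0 + w1 + w2 + j < h; omega
  · intro j j' hj hj' e; exact e
  · intro j j' hj hj' e
    have e' : w0 + w1 + j = w0 + w1 + j' := e; omega
  · intro j j' hj hj' e
    have e' : (if j < w4 then w0 + w1 + w2 + w3 + j else j - w4)
        = (if j' < w4 then w0 + w1 + w2 + w3 + j' else j' - w4) := e
    split_ifs at e' <;> omega
  · intro j j' hj hj' e
    have e' : w0 + j = w0 + j' := e; omega
  · intro j j' hj hj' e
    have e' : w0 + w1 + w2 + j = w0 + w1 + w2 + j' := e; omega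
  · intro j j' hj hj' e
    have e' : j = w0 + w1 + j' := e; omega
  · intro j j' hj hj' e
    have e' : w0 + w1 + j = (if j' < w4 then w0 + w1 + w2 + w3 + j' else j' - w4) := e
    split_ifs at e' <;> omega
  · intro j j' hj hj' e
    have e' : (if j < w4 then w0 + w1 + w2 + w3 + j else j - w4) = w0 + j' := e
    split_ifs at e' <;> omega
  · intro j j' hj hj' e
    have e' : w0 + j = w0 + w1 + w2 + j' := e; omega
  · intro j j' hj hj' e
    have e' : w0 + w1 + w2 + j = j' := e; omega

/-- Lemma on colorings of pseudo-buoys, part (i): if `∑ kᵢ ≤ 2h` then the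
pseudo-buoy is `h`-colorable. -/
theorem pseudoBuoy_colorable {V : Type*} [Fintype V]
    (H : SimpleGraph V) (B : Fin 5 → Set V) (hB : IsPseudoBuoy H B)
    (h : ℕ) (k : Fin 5 → ℕ)
    (hcol : ∀ i, (H.induce (B i)).Colorable (k i))
    (hpair : ∀ i : Fin 5, k i + k (i + 1) ≤ h)
    (hsum : ∑ i, k i ≤ 2 * h) :
    H.Colorable h := by
  classical
  have p0 : k 0 + k 1 ≤ h := hpair 0
  have p1 : k 1 + k 2 ≤ h := hpair 1
  have p2 : k 2 + k 3 ≤ h := hpair 2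
  have p3 : k 3 + k 4 ≤ h := hpair 3
  have p4 : k 4 + k 0 ≤ h := hpair 4
  rw [Fin.sum_univ_five] at hsum
  obtain ⟨f, A0, A1, A2, A3, A4, I0, I1, I2, I3, I4, D0, D1, D2, D3, D4⟩ :=
    exists_off (k 0) (k 1) (k 2) (k 3) (k 4) h p0 p1 p2 p3 p4 hsum
  have g : ∀ i, (H.induce (B i)).Coloring (Fin (k i)) := fun i => (hcol i).some
  have hmem : ∀ v : V, ∃ i, v ∈ B i := by
    intro v
    have hv : v ∈ ⋃ i, B i := by rw [hB.cover]; trivial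
    exact Set.mem_iUnion.mp hv
  have key : ∃ F : V → ℕ, (∀ v, F v < h) ∧ (∀ u v, H.Adj u v → F u ≠ F v) := by
    refine ⟨fun v => f ((hmem v).choose : Fin 5).val
      ((g (hmem v).choose ⟨v, (hmem v).choose_spec⟩ : Fin _)).val, ?_, ?_⟩
    · intro v
      have key1 : ∀ (i : Fin 5) (hv : v ∈ B i), f i.val ((g i ⟨v, hv⟩ : Fin _)).val < h := by
        intro i hv
        fin_cases i
        · exact A0 _ (Fin.is_lt _)
        · exact A1 _ (Fin.is_lt _)
        · exact A2 _ (Fin.is_lt _)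
        · exact A3 _ (Fin.is_lt _)
        · exact A4 _ (Fin.is_lt _)
      exact key1 _ (hmem v).choose_spec
    · intro u v hadj heq
      have key2 : ∀ (i i' : Fin 5) (hu : u ∈ B i) (hv : v ∈ B i'),
          f i.val ((g i ⟨u, hu⟩ : Fin _)).val = f i'.val ((g i' ⟨v, hv⟩ : Fin _)).val → False := by
        intro i i' hu hv e
        fin_cases i <;> fin_cases i'
        · exact (g 0).valid (show (H.induce (B 0)).Adj ⟨u, hu⟩ ⟨v, hv⟩ from hadj)
            (Fin.val_injective (I0 _ _ (Fin.is_lt _) (Fin.is_lt _) e))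
        · exact D0 _ _ (Fin.is_lt _) (Fin.is_lt _) e
        · exact hB.not_adj_skip 0 u hu v hv hadj
        · exact hB.not_adj_skip 3 v hv u hu hadj.symm
        · exact D4 _ _ (Fin.is_lt _) (Fin.is_lt _) e.symm
        · exact D0 _ _ (Fin.is_lt _) (Fin.is_lt _) e.symm
        · exact (g 1).valid (show (H.induce (B 1)).Adj ⟨u, hu⟩ ⟨v, hv⟩ from hadj)
            (Fin.val_injective (I1 _ _ (Fin.is_lt _) (Fin.is_lt _) e))
        · exact D1 _ _ (Fin.is_lt _) (Fin.is_lt _) e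
        · exact hB.not_adj_skip 1 u hu v hv hadj
        · exact hB.not_adj_skip 4 v hv u hu hadj.symm
        · exact hB.not_adj_skip 0 v hv u hu hadj.symm
        · exact D1 _ _ (Fin.is_lt _) (Fin.is_lt _) e.symm
        · exact (g 2).valid (show (H.induce (B 2)).Adj ⟨u, hu⟩ ⟨v, hv⟩ from hadj)
            (Fin.val_injective (I2 _ _ (Fin.is_lt _) (Fin.is_lt _) e))
        · exact D2 _ _ (Fin.is_lt _) (Fin.is_lt _) e
        · exact hB.not_adj_skip 2 u hu v hv hadj
        · exact hB.not_adj_skip 3 u hu v hv hadj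
        · exact hB.not_adj_skip 1 v hv u hu hadj.symm
        · exact D2 _ _ (Fin.is_lt _) (Fin.is_lt _) e.symm
        · exact (g 3).valid (show (H.induce (B 3)).Adj ⟨u, hu⟩ ⟨v, hv⟩ from hadj)
            (Fin.val_injective (I3 _ _ (Fin.is_lt _) (Fin.is_lt _) e))
        · exact D3 _ _ (Fin.is_lt _) (Fin.is_lt _) e
        · exact D4 _ _ (Fin.is_lt _) (Fin.is_lt _) e
        · exact hB.not_adj_skip 4 u hu v hv hadj
        · exact hB.not_adj_skip 2 v hv u hu hadj.symm
        · exact D3 _ _ (Fin.is_lt _) (Fin.is_lt _) e.symm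
        · exact (g 4).valid (show (H.induce (B 4)).Adj ⟨u, hu⟩ ⟨v, hv⟩ from hadj)
            (Fin.val_injective (I4 _ _ (Fin.is_lt _) (Fin.is_lt _) e))
      exact key2 _ _ (hmem u).choose_spec (hmem v).choose_spec heq
  obtain ⟨F, hF1, hF2⟩ := key
  exact ⟨Coloring.mk (fun v => ⟨F v, hF1 v⟩)
    (fun {a b} hadj h' => hF2 _ _ hadj (congrArg Fin.val h'))⟩
end

section
/- Let h ≥ 0 be an integer and let H be a pseudo-buoy with bags B1,…,B5 such that, for each i mod 5, the bag B_i has chromatic number exactly k_i, where k_1,…,k_5 are non-negative integers satisfying k_i + k_{i+1} ≤ h for each i mod 5. If k_1 + k_2 + k_3 + k_4 + k_5 > 2h, then the chromatic number of H is strictly greater than h. -/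
open SimpleGraph

lemma fin5_indep_card (T : Finset (Fin 5)) (hT : ∀ i ∈ T, i + 1 ∉ T) : T.card ≤ 2 := by
  revert T; decide

/-- Lemma on colorings of pseudo-buoys, part (ii): if each bag is
`kᵢ`-chromatic and `∑ kᵢ > 2h` then the pseudo-buoy is not `h`-colorable. -/
theorem pseudoBuoy_not_colorable {V : Type*} [Fintype V]
    (H : SimpleGraph V) (B : Fin 5 → Set V) (hB : IsPseudoBuoy H B)
    (h : ℕ) (k : Fin 5 → ℕ)
    (hchrom : ∀ i, (H.induce (B i)).chromaticNumber = k i)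
    (hpair : ∀ i : Fin 5, k i + k (i + 1) ≤ h)
    (hsum : 2 * h < ∑ i, k i) :
    (h : ℕ∞) < H.chromaticNumber := by
  classical
  rw [← not_le]
  intro hle
  obtain ⟨C⟩ := chromaticNumber_le_iff_colorable.mp hle
  set S : Fin 5 → Finset (Fin h) :=
    fun i => Finset.univ.filter (fun c => ∃ v : V, v ∈ B i ∧ C v = c) with hS
  have hk : ∀ i, k i ≤ (S i).card := by
    intro i
    have hcol : (H.induce (B i)).Colorable (S i).card := by
      have hc : (H.induce (B i)).Coloring (S i : Finset (Fin h)) := by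
        refine Coloring.mk (fun v => ⟨C v.1, ?_⟩) ?_
        · simp only [hS, Finset.mem_filter, Finset.mem_univ, true_and]
          exact ⟨v.1, v.2, rfl⟩
        · intro v w hadj hEq
          exact C.valid hadj (congrArg Subtype.val hEq)
      simpa [Fintype.card_coe] using hc.colorable
    have hcol2 := hcol.chromaticNumber_le
    rw [hchrom i] at hcol2
    exact_mod_cast hcol2
  have hdisj : ∀ c : Fin h, ∀ i : Fin 5, c ∈ S i → c ∉ S (i + 1) := by
    intro c i hci hci1
    simp only [hS, Finset.mem_filter, Finset.mem_univ, true_and] at hci hci1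
    obtain ⟨x, hx, hcx⟩ := hci
    obtain ⟨y, hy, hcy⟩ := hci1
    exact C.valid (hB.adj_next i x hx y hy) (hcx.trans hcy.symm)
  have hcount : ∑ i, (S i).card ≤ 2 * h := by
    calc ∑ i, (S i).card = ∑ i, ∑ c : Fin h, if c ∈ S i then 1 else 0 := by
          refine Finset.sum_congr rfl fun i _ => ?_
          rw [← Finset.card_filter, Finset.filter_mem_eq_inter, Finset.univ_inter]
      _ = ∑ c : Fin h, ∑ i, if c ∈ S i then 1 else 0 := Finset.sum_comm
      _ = ∑ c : Fin h, (Finset.univ.filter (fun i => c ∈ S i)).card := by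
          exact Finset.sum_congr rfl fun c _ => (Finset.card_filter _ _).symm
      _ ≤ ∑ _c : Fin h, 2 := by
          refine Finset.sum_le_sum fun c _ => fin5_indep_card _ fun i hi hi1 => ?_
          simp only [Finset.mem_filter] at hi hi1
          exact hdisj c i hi.2 hi1.2
      _ = 2 * h := by simp [Finset.sum_const, mul_comm]
  have hlt : 2 * h < ∑ i, (S i).card :=
    hsum.trans_le (Finset.sum_le_sum fun i _ => hk i)
  exact absurd hcount (not_le.mpr hlt)
end

section
/- Let k ≥ 2 and let G be a buoy with bags B1,…,B5 such that for each i mod 5 the induced subgraph on B_i is a k_i-critical (P5, P5-bar)-free graph, where k_1,…,k_5 are positive integers satisfying k_i + k_{i+1} ≤ k−1 for each i mod 5 and k_1 + k_2 + k_3 + k_4 + k_5 = 2k−1. Then G is a k-critical (P5, P5-bar)-free graph. -/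
open SimpleGraph

section BuoyAux

/-- The 5-cycle on `Fin 5`. -/
def cycle5 : SimpleGraph (Fin 5) where
  Adj i j := j = i + 1 ∨ i = j + 1
  symm := ⟨fun i j h => h.symm⟩
  loopless := ⟨fun i h => (by decide : ∀ j : Fin 5, ¬(j = j + 1 ∨ j = j + 1)) i h⟩

instance : DecidableRel cycle5.Adj := fun _ _ => inferInstanceAs (Decidable (_ ∨ _))
instance : DecidableRel (pathGraph 5).Adj := fun _ _ => decidable_of_iff _ pathGraph_adj.symm

lemma fin5_cases : ∀ i j : Fin 5, j = i ∨ j = i+1 ∨ j = i+2 ∨ j = i+3 ∨ j = i+4 := by decide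
lemma fin5_indep : ∀ S : Finset (Fin 5), (∀ i ∈ S, i+1 ∉ S) → S.card ≤ 2 := by decide
lemma fin5_back4 : ∀ i : Fin 5, i = (i+4)+1 := by decide
lemma fin5_back3 : ∀ i : Fin 5, i = (i+3)+2 := by decide

lemma P5_module : ∀ F : Finset (Fin 5),
    (∀ v ∉ F, (∀ x ∈ F, (pathGraph 5).Adj v x) ∨ (∀ x ∈ F, ¬(pathGraph 5).Adj v x)) →
    F.card ≤ 1 ∨ F = Finset.univ := by decide

lemma P5c_module : ∀ F : Finset (Fin 5),
    (∀ v ∉ F, (∀ x ∈ F, (pathGraph 5)ᶜ.Adj v x) ∨ (∀ x ∈ F, ¬(pathGraph 5)ᶜ.Adj v x)) →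
    F.card ≤ 1 ∨ F = Finset.univ := by decide

lemma mod_cancel_left {m p a b : ℕ} (ha : a < m) (hb : b < m)
    (h : (p + a) % m = (p + b) % m) : a = b := by
  have h2 : a ≡ b [MOD m] := Nat.ModEq.add_left_cancel' p h
  rwa [Nat.ModEq, Nat.mod_eq_of_lt ha, Nat.mod_eq_of_lt hb] at h2

lemma consec_mod_ne {m p q a b s t : ℕ} (hq : (p + s) % m = q % m)
    (ha : a < s) (hb : b < t) (hst : s + t ≤ m) :
    (p + a) % m ≠ (q + b) % m := by
  intro h
  have h1 : (p + s + b) % m = (q + b) % m := Nat.ModEq.add_right b hq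
  have h2 : (p + a) % m = (p + (s + b)) % m := by
    rw [h, ← h1, Nat.add_assoc]
  have h3 : a = s + b := mod_cancel_left (by omega) (by omega) h2
  omega

/-- Coloring a pseudo-buoy with interval color sets. -/
lemma pseudo_buoy_colorable {W : Type*} (H : SimpleGraph W) (A : Fin 5 → Set W)
    (hcov : (⋃ i, A i) = Set.univ)
    (hskip : ∀ i, ∀ x ∈ A i, ∀ y ∈ A (i + 2), ¬ H.Adj x y)
    (m : ℕ) (hm : 0 < m) (c : Fin 5 → ℕ)
    (hpair : ∀ i, c i + c (i + 1) ≤ m)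
    (hsum : c 0 + c 1 + c 2 + c 3 + c 4 = 2 * m)
    (hcol : ∀ i, (H.induce (A i)).Colorable (c i)) :
    H.Colorable m := by
  classical
  have hmem : ∀ w : W, ∃ i, w ∈ A i := fun w => Set.mem_iUnion.mp (hcov ▸ Set.mem_univ w)
  choose bg hbg using hmem
  have f : ∀ i, (H.induce (A i)).Coloring (Fin (c i)) := fun i => (hcol i).some
  set p : Fin 5 → ℕ := fun i =>
    match i with
    | 0 => 0
    | 1 => c 0
    | 2 => c 0 + c 1
    | 3 => c 0 + c 1 + c 2
    | 4 => c 0 + c 1 + c 2 + c 3 with hp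
  have hstep : ∀ i : Fin 5, (p i + c i) % m = p (i + 1) % m := by
    intro i
    fin_cases i
    · show (0 + c 0) % m = (c 0) % m; rw [Nat.zero_add]
    · rfl
    · rfl
    · rfl
    · show (c 0 + c 1 + c 2 + c 3 + c 4) % m = 0 % m
      rw [hsum, Nat.zero_mod, Nat.mul_mod_left]
  have hcm : ∀ i, c i ≤ m := fun i => le_trans (Nat.le_add_right _ _) (hpair i)
  set F : Fin 5 → W → ℕ := fun i w => if hw : w ∈ A i then (f i ⟨w, hw⟩ : Fin (c i)).val else 0
    with hF
  have hFlt : ∀ i w, w ∈ A i → F i w < c i := by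
    intro i w hw
    simp only [hF, dif_pos hw]
    exact (f i ⟨w, hw⟩).is_lt
  have hFne : ∀ i w w', w ∈ A i → w' ∈ A i → H.Adj w w' → F i w ≠ F i w' := by
    intro i w w' hw hw' hadj
    simp only [hF, dif_pos hw, dif_pos hw']
    intro hh
    exact (f i).valid (show (H.induce (A i)).Adj ⟨w, hw⟩ ⟨w', hw'⟩ from hadj)
      (Fin.val_injective hh)
  refine ⟨Coloring.mk (fun w => ⟨(p (bg w) + F (bg w) w) % m, Nat.mod_lt _ hm⟩) ?_⟩
  intro w w' hadj
  simp only [Ne, Fin.mk.injEq]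
  rcases fin5_cases (bg w) (bg w') with h5 | h5 | h5 | h5 | h5
  · rw [h5]
    intro heq
    exact hFne (bg w) w w' (hbg w) (h5 ▸ hbg w') hadj
      (mod_cancel_left (lt_of_lt_of_le (hFlt _ _ (hbg w)) (hcm _))
        (lt_of_lt_of_le (hFlt _ _ (h5 ▸ hbg w')) (hcm _)) heq)
  · rw [h5]
    exact consec_mod_ne (hstep (bg w)) (hFlt _ _ (hbg w)) (hFlt _ _ (h5 ▸ hbg w'))
      (hpair (bg w))
  · exact absurd hadj (hskip (bg w) w (hbg w) w' (h5 ▸ hbg w'))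
  · have hi : bg w = bg w' + 2 := by rw [h5]; exact fin5_back3 (bg w)
    exact absurd hadj.symm (hskip (bg w') w' (hbg w') w (hi ▸ hbg w))
  · have hi : bg w = bg w' + 1 := by rw [h5]; exact fin5_back4 (bg w)
    rw [hi]
    exact (consec_mod_ne (hstep (bg w')) (hFlt _ _ (hbg w')) (hFlt _ _ (hi ▸ hbg w))
      (hpair (bg w'))).symm

/-- Lower bound on colorings of a buoy by double counting. -/
lemma buoy_sum_le {V : Type*} (G : SimpleGraph V) (B : Fin 5 → Set V)
    (hadj : ∀ i, ∀ x ∈ B i, ∀ y ∈ B (i+1), G.Adj x y)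
    (κ : Fin 5 → ℕ)
    (hlb : ∀ i, ∀ n : ℕ, (G.induce (B i)).Colorable n → κ i ≤ n)
    {n : ℕ} (hc : G.Colorable n) : ∑ i, κ i ≤ 2 * n := by
  classical
  obtain ⟨φ⟩ := hc
  set C : Fin 5 → Finset (Fin n) := fun i =>
    Finset.univ.filter (fun α => ∃ x ∈ B i, φ x = α) with hC
  have hmemC : ∀ i α, α ∈ C i ↔ ∃ x ∈ B i, φ x = α := by
    intro i α; simp [hC]
  have hκC : ∀ i, κ i ≤ (C i).card := by
    intro i
    have ψ : (G.induce (B i)).Coloring {α // α ∈ C i} :=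
      Coloring.mk (fun x => ⟨φ ↑x, (hmemC i _).mpr ⟨↑x, x.prop, rfl⟩⟩)
        (by
          intro a b hab
          simp only [Ne, Subtype.mk.injEq]
          exact φ.valid hab)
    have := hlb i _ ψ.colorable
    rwa [Fintype.card_coe] at this
  have hCdisj : ∀ i, ∀ α ∈ C i, α ∉ C (i+1) := by
    intro i α hα hα'
    obtain ⟨x, hx, hφx⟩ := (hmemC i α).mp hα
    obtain ⟨y, hy, hφy⟩ := (hmemC (i+1) α).mp hα'
    exact φ.valid (hadj i x hx y hy) (by rw [hφx, hφy])
  have hdouble : ∑ i, (C i).card = ∑ α : Fin n, (Finset.univ.filter (fun i => α ∈ C i)).card := by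
    have h1 : ∀ i, (C i).card = ∑ α : Fin n, if α ∈ C i then 1 else 0 := by
      intro i
      rw [← Finset.card_filter]
      congr 1
      ext α
      simp
    have h2 : ∀ α : Fin n, (Finset.univ.filter (fun i => α ∈ C i)).card
        = ∑ i : Fin 5, if α ∈ C i then 1 else 0 := fun α => Finset.card_filter _ _
    rw [Finset.sum_congr rfl (fun i _ => h1 i), Finset.sum_comm]
    exact Finset.sum_congr rfl (fun α _ => (h2 α).symm)
  have hperα : ∀ α : Fin n, (Finset.univ.filter (fun i => α ∈ C i)).card ≤ 2 := by
    intro α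
    apply fin5_indep
    intro i hi hi1
    rw [Finset.mem_filter] at hi hi1
    exact hCdisj i α hi.2 hi1.2
  calc ∑ i, κ i ≤ ∑ i, (C i).card := Finset.sum_le_sum (fun i _ => hκC i)
    _ = ∑ α : Fin n, (Finset.univ.filter (fun i => α ∈ C i)).card := hdouble
    _ ≤ ∑ _α : Fin n, 2 := Finset.sum_le_sum (fun α _ => hperα α)
    _ = 2 * n := by simp [Finset.sum_const, Finset.card_univ, Nat.mul_comm]

/-- Composing two induced subgraphs. -/
noncomputable def induceInduceIso {V : Type*} (G : SimpleGraph V) (s : Set V) (A : Set s) :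
    (G.induce s).induce A ≃g G.induce (Subtype.val '' A) where
  toEquiv := Equiv.Set.image Subtype.val A Subtype.val_injective
  map_rel_iff' := Iff.rfl

lemma IsModule.induce {V : Type*} {G : SimpleGraph V} {X : Set V} (h : IsModule G X)
    (s : Set V) : IsModule (G.induce s) (Subtype.val ⁻¹' X) := by
  intro v hv
  rcases h ↑v hv with h1 | h1
  · exact Or.inl fun x hx => h1 ↑x hx
  · exact Or.inr fun x hx hA => h1 ↑x hx hA

lemma IsModule.map {V W : Type*} {G : SimpleGraph V} {H : SimpleGraph W} (e : G ≃g H)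
    {X : Set V} (h : IsModule G X) : IsModule H (⇑e '' X) := by
  intro v hv
  have hv' : e.symm v ∉ X := fun hmem => hv ⟨_, hmem, e.apply_symm_apply v⟩
  rcases h _ hv' with h1 | h1
  · left
    rintro x ⟨y, hy, rfl⟩
    have := e.map_adj_iff.mpr (h1 y hy)
    rwa [e.apply_symm_apply] at this
  · right
    rintro x ⟨y, hy, rfl⟩ hA
    apply h1 y hy
    rw [← e.map_adj_iff, e.apply_symm_apply]
    exact hA

lemma bag_isModule {V : Type*} {G : SimpleGraph V} {B : Fin 5 → Set V}
    (hadj : ∀ i, ∀ x ∈ B i, ∀ y ∈ B (i+1), G.Adj x y)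
    (hskip : ∀ i, ∀ x ∈ B i, ∀ y ∈ B (i+2), ¬ G.Adj x y)
    (hcov : (⋃ i, B i) = Set.univ) (i : Fin 5) : IsModule G (B i) := by
  intro v hv
  obtain ⟨j, hj⟩ : ∃ j, v ∈ B j := Set.mem_iUnion.mp (hcov ▸ Set.mem_univ v)
  rcases fin5_cases i j with h5 | h5 | h5 | h5 | h5
  · exact absurd (h5 ▸ hj) hv
  · exact Or.inl fun x hx => (hadj i x hx v (h5 ▸ hj)).symm
  · exact Or.inr fun x hx hA => hskip i x hx v (h5 ▸ hj) hA.symm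
  · have hi : i = j + 2 := by rw [h5]; exact fin5_back3 i
    exact Or.inr fun x hx hA => hskip j v hj x (hi ▸ hx) hA
  · have hi : i = j + 1 := by rw [h5]; exact fin5_back4 i
    exact Or.inl fun x hx => hadj j v hj x (hi ▸ hx)

/-- A buoy whose bags are `H`-free is `H`-free, if `H` is a prime graph on five
vertices not isomorphic to the 5-cycle. -/
lemma buoy_inducedFree {V : Type*} {G : SimpleGraph V} {B : Fin 5 → Set V}
    (hbuoy : IsBuoy G B) (hcov : (⋃ i, B i) = Set.univ)
    (H : SimpleGraph (Fin 5))
    (hmodH : ∀ F : Finset (Fin 5),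
      (∀ v ∉ F, (∀ x ∈ F, H.Adj v x) ∨ (∀ x ∈ F, ¬ H.Adj v x)) →
      F.card ≤ 1 ∨ F = Finset.univ)
    (hC5 : ∀ _e : cycle5 ≃g H, False)
    (hbags : ∀ i, InducedFree (G.induce (B i)) H) :
    InducedFree G H := by
  classical
  rintro ⟨s, ⟨e⟩⟩
  have hmod : ∀ i : Fin 5, IsModule H (⇑e '' (Subtype.val ⁻¹' (B i))) :=
    fun i => ((bag_isModule hbuoy.adj_next hbuoy.not_adj_skip hcov i).induce s).map e
  have hsub : ∀ i, (Subtype.val ⁻¹' (B i) : Set s).Subsingleton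
      ∨ (Subtype.val ⁻¹' (B i) : Set s) = Set.univ := by
    intro i
    set X := ⇑e '' (Subtype.val ⁻¹' (B i)) with hX
    have hmem : ∀ a, a ∈ X.toFinset ↔ a ∈ X := fun a => Set.mem_toFinset
    rcases hmodH X.toFinset (fun v hv => by
      rcases hmod i v (fun h => hv ((hmem v).mpr h)) with h1 | h1
      · exact Or.inl fun x hx => h1 x ((hmem x).mp hx)
      · exact Or.inr fun x hx => h1 x ((hmem x).mp hx)) with hle | huniv
    · left
      intro a ha b hb
      have : e a = e b := Finset.card_le_one.mp hle _ ((hmem _).mpr ⟨a, ha, rfl⟩)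
        _ ((hmem _).mpr ⟨b, hb, rfl⟩)
      exact e.toEquiv.injective this
    · right
      apply Set.eq_univ_of_forall
      intro a
      have : e a ∈ X := by
        rw [← hmem, huniv]; exact Finset.mem_univ _
      obtain ⟨b, hb, hba⟩ := this
      rwa [← e.toEquiv.injective hba]
  by_cases hU : ∃ j, (Subtype.val ⁻¹' (B j) : Set s) = Set.univ
  · obtain ⟨j, hj⟩ := hU
    have hsubset : ∀ v, v ∈ s → v ∈ B j := by
      intro v hv
      have : (⟨v, hv⟩ : s) ∈ (Subtype.val ⁻¹' (B j) : Set s) := by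
        rw [hj]; exact Set.mem_univ _
      exact this
    set t : Set (B j) := Subtype.val ⁻¹' s with ht
    have hts : Subtype.val '' t = s := by
      ext v
      constructor
      · rintro ⟨⟨y, hy⟩, hmem, rfl⟩; exact hmem
      · intro hv; exact ⟨⟨v, hsubset v hv⟩, hv, rfl⟩
    exact hbags j ⟨t, ⟨(induceInduceIso G (B j) t).trans
      (show G.induce (Subtype.val '' t) ≃g H by rw [hts]; exact e)⟩⟩
  · push_neg at hU
    have hss : ∀ i, (Subtype.val ⁻¹' (B i) : Set s).Subsingleton :=
      fun i => (hsub i).resolve_right (hU i)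
    have hmem' : ∀ a : s, ∃ i, (a : V) ∈ B i :=
      fun a => Set.mem_iUnion.mp (hcov ▸ Set.mem_univ (a : V))
    choose β hβ using hmem'
    have hβinj : Function.Injective β := by
      intro a b hab
      exact hss (β a) (hβ a) (by rw [hab]; exact hβ b)
    have hbij : Function.Bijective (β ∘ e.toEquiv.symm) :=
      Finite.injective_iff_bijective.mp (hβinj.comp e.toEquiv.symm.injective)
    set σ := Equiv.ofBijective _ hbij with hσ
    set ψ : Fin 5 ≃ s := σ.symm.trans e.toEquiv.symm with hψdef
    have hψ : ∀ i, ((ψ i : s) : V) ∈ B i := by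
      intro i
      have h1 : β (ψ i) = i := σ.apply_symm_apply i
      have h2 := hβ (ψ i)
      rwa [h1] at h2
    have hC : cycle5 ≃g G.induce s := by
      refine ⟨ψ, ?_⟩
      intro i j
      show (G.induce s).Adj (ψ i) (ψ j) ↔ cycle5.Adj i j
      rcases fin5_cases i j with h5 | h5 | h5 | h5 | h5
      · refine iff_of_false ?_ ?_
        · rw [h5]; exact (G.induce s).irrefl
        · intro h
          exact (by decide : ∀ i : Fin 5, ¬(i = i+1 ∨ i = i+1)) i (h5 ▸ h)
      · refine iff_of_true ?_ (Or.inl h5)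
        exact hbuoy.adj_next i _ (hψ i) _ (h5 ▸ hψ j)
      · refine iff_of_false ?_ ?_
        · exact hbuoy.not_adj_skip i _ (hψ i) _ (h5 ▸ hψ j)
        · intro h
          exact (by decide : ∀ i : Fin 5, ¬(i+2 = i+1 ∨ i = (i+2)+1)) i (h5 ▸ h)
      · have hi : i = j + 2 := by rw [h5]; exact fin5_back3 i
        refine iff_of_false ?_ ?_
        · intro hA
          exact hbuoy.not_adj_skip j _ (hψ j) _ (hi ▸ hψ i) hA.symm
        · intro h
          exact (by decide : ∀ i : Fin 5, ¬(i+3 = i+1 ∨ i = (i+3)+1)) i (h5 ▸ h)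
      · have hi : i = j + 1 := by rw [h5]; exact fin5_back4 i
        refine iff_of_true ?_ (Or.inr hi)
        exact (hbuoy.adj_next j _ (hψ j) _ (hi ▸ hψ i)).symm
    exact hC5 (hC.trans e)

end BuoyAux

/-- Construction 2: a buoy whose bags are `kᵢ`-critical (P5, P5-bar)-free
graphs, with `kᵢ + kᵢ₊₁ ≤ k - 1` and `∑ kᵢ = 2k - 1`, is a `k`-critical
(P5, P5-bar)-free graph. -/
theorem buoy_construction_critical {V : Type*} [Fintype V]
    (G : SimpleGraph V) (k : ℕ) (hk : 2 ≤ k)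
    (B : Fin 5 → Set V) (hbuoy : IsBuoy G B) (hcover : (⋃ i, B i) = Set.univ)
    (κ : Fin 5 → ℕ) (hκpos : ∀ i, 1 ≤ κ i)
    (hcrit : ∀ i, IsKCritical (G.induce (B i)) (κ i))
    (hfree : ∀ i, P5P5barFree (G.induce (B i)))
    (hpair : ∀ i : Fin 5, κ i + κ (i + 1) ≤ k - 1)
    (hsum : ∑ i, κ i = 2 * k - 1) :
    IsKCritical G k ∧ P5P5barFree G := by
  classical
  have hadj := hbuoy.adj_next
  have hskip := hbuoy.not_adj_skip
  have hκle : ∀ i, ∀ n : ℕ, (G.induce (B i)).Colorable n → κ i ≤ n := by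
    intro i n hn
    have h := hn.chromaticNumber_le
    rw [(hcrit i).1] at h
    exact_mod_cast h
  have hκcol : ∀ i, (G.induce (B i)).Colorable (κ i) :=
    fun i => chromaticNumber_le_iff_colorable.mp (le_of_eq (hcrit i).1)
  have hsum5 : κ 0 + κ 1 + κ 2 + κ 3 + κ 4 = 2 * k - 1 := by
    rw [← hsum, Fin.sum_univ_five]
  have hp0 : κ 0 + κ 1 ≤ k - 1 := hpair 0
  have hp1 : κ 1 + κ 2 ≤ k - 1 := hpair 1
  have hp2 : κ 2 + κ 3 ≤ k - 1 := hpair 2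
  have hp3 : κ 3 + κ 4 ≤ k - 1 := hpair 3
  have hp4 : κ 4 + κ 0 ≤ k - 1 := hpair 4
  have hκ0 := hκpos 0
  have hκ1 := hκpos 1
  have hκ2 := hκpos 2
  have hκ3 := hκpos 3
  have hκ4 := hκpos 4
  -- Upper bound: `G` is `k`-colorable
  have hcolk : G.Colorable k := by
    apply pseudo_buoy_colorable G B hcover hskip k (by omega)
      (fun i => if i = 0 then κ 0 + 1 else κ i)
    · intro i
      fin_cases i <;> simp <;> omega
    · simp
      omega
    · intro i
      by_cases h : i = 0
      · subst h
        simpa using (hκcol 0).mono (Nat.le_succ _)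
      · simpa [h] using hκcol i
  -- Lower bound
  have hlow : ∀ n : ℕ, G.Colorable n → k ≤ n := by
    intro n hn
    have := buoy_sum_le G B hadj κ hκle hn
    rw [hsum] at this
    omega
  have hchrom : G.chromaticNumber = k := by
    refine le_antisymm hcolk.chromaticNumber_le ?_
    rw [hcolk.chromaticNumber_eq_sInf]
    have hle : k ≤ sInf {n' : ℕ | G.Colorable n'} :=
      le_csInf ⟨k, hcolk⟩ fun n hn => hlow n hn
    exact_mod_cast hle
  -- Criticality
  have hcriti : ∀ s : Set V, s ≠ Set.univ → (G.induce s).Colorable (k - 1) := by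
    intro s hs
    obtain ⟨v, hv⟩ := (Set.ne_univ_iff_exists_notMem s).mp hs
    obtain ⟨j, hj⟩ : ∃ j, v ∈ B j := Set.mem_iUnion.mp (hcover ▸ Set.mem_univ v)
    apply pseudo_buoy_colorable (G.induce s) (fun i => Subtype.val ⁻¹' (B i)) ?_ ?_ (k-1)
      (by omega) (fun i => if i = j then κ j - 1 else κ i) ?_ ?_ ?_
    · ext a
      simp only [Set.mem_iUnion, Set.mem_univ, iff_true, Set.mem_preimage]
      exact Set.mem_iUnion.mp (hcover ▸ Set.mem_univ (a : V))
    · intro i x hx y hy hA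
      exact hskip i ↑x hx ↑y hy hA
    · intro i
      have h1 : (if i = j then κ j - 1 else κ i) ≤ κ i := by
        split_ifs with h
        · subst h; omega
        · exact le_rfl
      have h2 : (if i + 1 = j then κ j - 1 else κ (i+1)) ≤ κ (i+1) := by
        split_ifs with h
        · rw [h]; omega
        · exact le_rfl
      have := hpair i
      show (if i = j then κ j - 1 else κ i) + (if i + 1 = j then κ j - 1 else κ (i+1)) ≤ k - 1
      omega
    · have hκj := hκpos j
      fin_cases j <;> simp <;> omega
    · intro i
      have iso1 := induceInduceIso G s (Subtype.val ⁻¹' (B i))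
      have h1 : (Subtype.val '' (Subtype.val ⁻¹' (B i) : Set s)) = s ∩ B i := by
        ext x
        constructor
        · rintro ⟨⟨y, hy⟩, hmem, rfl⟩; exact ⟨hy, hmem⟩
        · rintro ⟨hx1, hx2⟩; exact ⟨⟨x, hx1⟩, hx2, rfl⟩
      have iso2 := induceInduceIso G (B i) (Subtype.val ⁻¹' s)
      have h2 : (Subtype.val '' (Subtype.val ⁻¹' s : Set (B i))) = s ∩ B i := by
        ext x
        constructor
        · rintro ⟨⟨y, hy⟩, hmem, rfl⟩; exact ⟨hmem, hy⟩
        · rintro ⟨hx1, hx2⟩; exact ⟨⟨x, hx2⟩, hx1, rfl⟩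
      rw [h1] at iso1
      rw [h2] at iso2
      apply Colorable.of_hom (SimpleGraph.Embedding.toHom (iso1.trans iso2.symm).toRelEmbedding)
      by_cases hij : i = j
      · subst hij
        simp only [if_pos rfl]
        apply (hcrit i).2
        intro hEq
        apply hv
        have : (⟨v, hj⟩ : B i) ∈ (Subtype.val ⁻¹' s : Set (B i)) := by
          rw [hEq]; exact Set.mem_univ _
        exact this
      · simp only [if_neg hij]
        exact Colorable.of_hom (SimpleGraph.Embedding.induce _).toHom (hκcol i)
  -- (P5, P5-bar)-freeness
  have hC5P : ∀ _e : cycle5 ≃g pathGraph 5, False := by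
    intro f
    have h := f.card_edgeFinset_eq
    rw [(by decide : cycle5.edgeFinset.card = 5),
      (by decide : (pathGraph 5).edgeFinset.card = 4)] at h
    omega
  have hC5Pc : ∀ _e : cycle5 ≃g (pathGraph 5)ᶜ, False := by
    intro f
    have h := f.card_edgeFinset_eq
    rw [(by decide : cycle5.edgeFinset.card = 5),
      (by decide : (pathGraph 5)ᶜ.edgeFinset.card = 6)] at h
    omega
  exact ⟨⟨hchrom, hcriti⟩,
    buoy_inducedFree hbuoy hcover _ P5_module hC5P (fun i => (hfree i).1),
    buoy_inducedFree hbuoy hcover _ P5c_module hC5Pc (fun i => (hfree i).2)⟩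
end
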